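/- Let a > 0 and α = √(a/2). The map x(u,v) = e^{αu+v/(2α)}(cos(αu−v/(2α)) c₁ + sin(αu−v/(2α)) c₂) + e^{−(αu+v/(2α))}(cos(αu−v/(2α)) c₃ + sin(αu−v/(2α)) c₄), with c₁ = ½(1,0,1,0), c₂ = ½(0,1,0,1), c₃ = ½(1,0,−1,0), c₄ = ½(0,1,0,−1) in E⁴₂, satisfies ⟨x,x⟩ = 1, ⟨x_u,x_u⟩ = ⟨x_v,x_v⟩ = 0 and ⟨x_u,x_v⟩ = −1 everywhere. -/

import Mathlib

noncomputable def mink2 (x y : Fin 4 → ℝ) : ℝ :=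
  x 0 * y 0 + x 1 * y 1 - x 2 * y 2 - x 3 * y 3

noncomputable def c₁ : Fin 4 → ℝ := ![1/2, 0, 1/2, 0]
noncomputable def c₂ : Fin 4 → ℝ := ![0, 1/2, 0, 1/2]
noncomputable def c₃ : Fin 4 → ℝ := ![1/2, 0, -(1/2), 0]
noncomputable def c₄ : Fin 4 → ℝ := ![0, 1/2, 0, -(1/2)]

noncomputable def xMap (a : ℝ) (u v : ℝ) : Fin 4 → ℝ :=
  let α := Real.sqrt (a / 2)
  Real.exp (α * u + v / (2 * α)) •
    (Real.cos (α * u - v / (2 * α)) • c₁ + Real.sin (α * u - v / (2 * α)) • c₂) +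
  Real.exp (-(α * u + v / (2 * α))) •
    (Real.cos (α * u - v / (2 * α)) • c₃ + Real.sin (α * u - v / (2 * α)) • c₄)

noncomputable def xU (a : ℝ) (u v : ℝ) : Fin 4 → ℝ :=
  fun i => deriv (fun t => xMap a t v i) u

noncomputable def xV (a : ℝ) (u v : ℝ) : Fin 4 → ℝ :=
  fun i => deriv (fun t => xMap a u t i) v

/-- coefficient tables -/
noncomputable def E1 : Fin 4 → ℝ := ![1/2, 1/2, 1/2, 1/2]
noncomputable def E2 : Fin 4 → ℝ := ![1/2, 1/2, -(1/2), -(1/2)]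
noncomputable def S1 : Fin 4 → ℝ := ![1, 0, 1, 0]
noncomputable def S2 : Fin 4 → ℝ := ![0, 1, 0, 1]

lemma hdU (m k e1 e2 s1 s2 t : ℝ) :
    HasDerivAt (fun t : ℝ =>
      (e1 * Real.exp (m*t+k) + e2 * Real.exp (-(m*t+k))) *
      (s1 * Real.cos (m*t-k) + s2 * Real.sin (m*t-k)))
    (m * ((e1 * Real.exp (m*t+k) - e2 * Real.exp (-(m*t+k))) *
            (s1 * Real.cos (m*t-k) + s2 * Real.sin (m*t-k))
        + (e1 * Real.exp (m*t+k) + e2 * Real.exp (-(m*t+k))) *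
            (s2 * Real.cos (m*t-k) - s1 * Real.sin (m*t-k)))) t := by
  have hp : HasDerivAt (fun t : ℝ => m*t+k) m t := by
    simpa using ((hasDerivAt_id t).const_mul m).add_const k
  have hq : HasDerivAt (fun t : ℝ => m*t-k) m t := by
    simpa using ((hasDerivAt_id t).const_mul m).sub_const k
  have h := ((hp.exp.const_mul e1).add ((hp.neg.exp).const_mul e2)).mul
    (((hq.cos).const_mul s1).add ((hq.sin).const_mul s2))
  refine h.congr_deriv ?_
  simp only [Pi.add_apply, Pi.neg_apply]
  ring

lemma hdV (c k e1 e2 s1 s2 t : ℝ) :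
    HasDerivAt (fun t : ℝ =>
      (e1 * Real.exp (k + t/c) + e2 * Real.exp (-(k + t/c))) *
      (s1 * Real.cos (k - t/c) + s2 * Real.sin (k - t/c)))
    ((1/c) * ((e1 * Real.exp (k + t/c) - e2 * Real.exp (-(k + t/c))) *
            (s1 * Real.cos (k - t/c) + s2 * Real.sin (k - t/c))
        - (e1 * Real.exp (k + t/c) + e2 * Real.exp (-(k + t/c))) *
            (s2 * Real.cos (k - t/c) - s1 * Real.sin (k - t/c)))) t := by
  have hp : HasDerivAt (fun t : ℝ => k + t/c) (1/c) t := by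
    simpa using ((hasDerivAt_id t).div_const c).const_add k
  have hq : HasDerivAt (fun t : ℝ => k - t/c) (-(1/c)) t := by
    simpa using ((hasDerivAt_id t).div_const c).const_sub k
  have h := ((hp.exp.const_mul e1).add ((hp.neg.exp).const_mul e2)).mul
    (((hq.cos).const_mul s1).add ((hq.sin).const_mul s2))
  refine h.congr_deriv ?_
  simp only [Pi.add_apply, Pi.neg_apply]
  ring

theorem stmt_12 (a : ℝ) (ha : 0 < a) :
    (∀ u v : ℝ, mink2 (xMap a u v) (xMap a u v) = 1) ∧
    (∀ u v : ℝ, mink2 (xU a u v) (xU a u v) = 0) ∧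
    (∀ u v : ℝ, mink2 (xV a u v) (xV a u v) = 0) ∧
    (∀ u v : ℝ, mink2 (xU a u v) (xV a u v) = -1) := by
  set α := Real.sqrt (a / 2) with hαdef
  have hα : 0 < α := Real.sqrt_pos.mpr (by linarith)
  have hx : ∀ (u v : ℝ) (i : Fin 4), xMap a u v i =
      (E1 i * Real.exp (α*u + v/(2*α)) + E2 i * Real.exp (-(α*u + v/(2*α)))) *
      (S1 i * Real.cos (α*u - v/(2*α)) + S2 i * Real.sin (α*u - v/(2*α))) := by
    intro u v i
    fin_cases i <;>
      simp [xMap, c₁, c₂, c₃, c₄, E1, E2, S1, S2, ← hαdef] <;> ring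
  have hU : ∀ (u v : ℝ) (i : Fin 4), xU a u v i =
      α * ((E1 i * Real.exp (α*u + v/(2*α)) - E2 i * Real.exp (-(α*u + v/(2*α)))) *
            (S1 i * Real.cos (α*u - v/(2*α)) + S2 i * Real.sin (α*u - v/(2*α)))
        + (E1 i * Real.exp (α*u + v/(2*α)) + E2 i * Real.exp (-(α*u + v/(2*α)))) *
            (S2 i * Real.cos (α*u - v/(2*α)) - S1 i * Real.sin (α*u - v/(2*α)))) := by
    intro u v i
    have heq : (fun t => xMap a t v i) = (fun t =>
        (E1 i * Real.exp (α*t + v/(2*α)) + E2 i * Real.exp (-(α*t + v/(2*α)))) *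
        (S1 i * Real.cos (α*t - v/(2*α)) + S2 i * Real.sin (α*t - v/(2*α)))) :=
      funext fun t => hx t v i
    rw [xU, heq, (hdU α (v/(2*α)) (E1 i) (E2 i) (S1 i) (S2 i) u).deriv]
  have hV : ∀ (u v : ℝ) (i : Fin 4), xV a u v i =
      (1/(2*α)) * ((E1 i * Real.exp (α*u + v/(2*α)) - E2 i * Real.exp (-(α*u + v/(2*α)))) *
            (S1 i * Real.cos (α*u - v/(2*α)) + S2 i * Real.sin (α*u - v/(2*α)))
        - (E1 i * Real.exp (α*u + v/(2*α)) + E2 i * Real.exp (-(α*u + v/(2*α)))) *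
            (S2 i * Real.cos (α*u - v/(2*α)) - S1 i * Real.sin (α*u - v/(2*α)))) := by
    intro u v i
    have heq : (fun t => xMap a u t i) = (fun t =>
        (E1 i * Real.exp (α*u + t/(2*α)) + E2 i * Real.exp (-(α*u + t/(2*α)))) *
        (S1 i * Real.cos (α*u - t/(2*α)) + S2 i * Real.sin (α*u - t/(2*α)))) :=
      funext fun t => hx u t i
    rw [xV, heq, (hdV (2*α) (α*u) (E1 i) (E2 i) (S1 i) (S2 i) v).deriv]
  have hEF : ∀ u v : ℝ, Real.exp (α*u + v/(2*α)) * Real.exp (-(α*u + v/(2*α))) = 1 := by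
    intro u v
    rw [← Real.exp_add, show α*u + v/(2*α) + -(α*u + v/(2*α)) = 0 from by ring]
    exact Real.exp_zero
  have hCS : ∀ u v : ℝ, Real.cos (α*u - v/(2*α)) ^ 2 + Real.sin (α*u - v/(2*α)) ^ 2 = 1 :=
    fun u v => Real.cos_sq_add_sin_sq _
  have hαβ : 2*α*(1/(2*α)) = 1 := by field_simp
  refine ⟨fun u v => ?_, fun u v => ?_, fun u v => ?_, fun u v => ?_⟩
  · simp only [mink2, hx u v 0, hx u v 1, hx u v 2, hx u v 3, E1, E2, S1, S2]
    simp only [Matrix.cons_val_zero, Matrix.cons_val_one, Matrix.head_cons,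
      Matrix.cons_val_two, Matrix.tail_cons, Matrix.cons_val_three]
    linear_combination Real.exp (α*u + v/(2*α)) * Real.exp (-(α*u + v/(2*α))) * hCS u v + hEF u v
  · simp only [mink2, hU u v 0, hU u v 1, hU u v 2, hU u v 3, E1, E2, S1, S2]
    simp only [Matrix.cons_val_zero, Matrix.cons_val_one, Matrix.head_cons,
      Matrix.cons_val_two, Matrix.tail_cons, Matrix.cons_val_three]
    ring
  · simp only [mink2, hV u v 0, hV u v 1, hV u v 2, hV u v 3, E1, E2, S1, S2]
    simp only [Matrix.cons_val_zero, Matrix.cons_val_one, Matrix.head_cons,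
      Matrix.cons_val_two, Matrix.tail_cons, Matrix.cons_val_three]
    ring
  · simp only [mink2, hU u v 0, hU u v 1, hU u v 2, hU u v 3,
      hV u v 0, hV u v 1, hV u v 2, hV u v 3, E1, E2, S1, S2]
    simp only [Matrix.cons_val_zero, Matrix.cons_val_one, Matrix.head_cons,
      Matrix.cons_val_two, Matrix.tail_cons, Matrix.cons_val_three]
    set E := Real.exp (α*u + v/(2*α))
    set F := Real.exp (-(α*u + v/(2*α)))
    set C := Real.cos (α*u - v/(2*α))
    set S := Real.sin (α*u - v/(2*α))
    linear_combination (-(E*F*(C^2+S^2))) * hαβ + (-(E*F)) * hCS u v + (-1) * hEF u v
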